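/- Let t_n denote the number of independent dominating sets of the chain triangular cactus T_n for n ≥ 1, and set t_0 = 1 (the one-vertex graph T_0 has exactly one maximal independent set). Then, in the ring of formal power series over ℚ, (1 - X - X²) · (∑_{n≥0} t_n Xⁿ) = 1 + 2X + X². -/

import Mathlib

/-- `S` is an independent dominating set of `G`: pairwise non-adjacent, and every
vertex outside `S` has a neighbour in `S`. -/
def IsIndepDomSet {V : Type*} (G : SimpleGraph V) (S : Finset V) : Prop :=
  (∀ v ∈ S, ∀ w ∈ S, ¬ G.Adj v w) ∧ ∀ v, v ∉ S → ∃ w ∈ S, G.Adj v w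

/-- The chain triangular cactus `T n`: vertices `Sum.inl i` are `x i`
(`0 ≤ i ≤ n`) and `Sum.inr k` is `y (k+1)` (`0 ≤ k ≤ n-1`); the `i`-th triangle
(`1 ≤ i ≤ n`) has vertices `x (i-1)`, `x i`, `y i`. -/
def triChain (n : ℕ) : SimpleGraph (Fin (n + 1) ⊕ Fin n) :=
  SimpleGraph.fromRel fun p q =>
    match p, q with
    | Sum.inl i, Sum.inl j => (i : ℕ) + 1 = (j : ℕ)
    | Sum.inl i, Sum.inr k => (i : ℕ) = (k : ℕ) ∨ (i : ℕ) = (k : ℕ) + 1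
    | _, _ => False

lemma triChain_adj (n : ℕ) (p q : Fin (n+1) ⊕ Fin n) :
    (triChain n).Adj p q ↔ (match p, q with
      | Sum.inl i, Sum.inl j => (i : ℕ) + 1 = (j : ℕ) ∨ (j : ℕ) + 1 = (i : ℕ)
      | Sum.inl i, Sum.inr k => (i : ℕ) = (k : ℕ) ∨ (i : ℕ) = (k : ℕ) + 1
      | Sum.inr k, Sum.inl i => (i : ℕ) = (k : ℕ) ∨ (i : ℕ) = (k : ℕ) + 1
      | Sum.inr _, Sum.inr _ => False) := by
  rcases p with i | k <;> rcases q with j | l <;>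
    simp only [triChain, SimpleGraph.fromRel_adj, ne_eq, Sum.inl.injEq, Sum.inr.injEq,
      reduceCtorEq, not_false_eq_true, true_and, false_or, or_false, Fin.ext_iff]
  constructor
  · rintro ⟨h1, h2⟩; exact h2
  · intro h; exact ⟨by omega, h⟩
  · tauto

/-- "exactly one of x_i, x_{i+1}, y_{i+1} is in S" -/
def Tone (n : ℕ) (i : Fin (n+1)) (S : Finset (Fin (n+2) ⊕ Fin (n+1))) : Prop :=
  (Sum.inl i.castSucc ∈ S ∧ Sum.inl i.succ ∉ S ∧ Sum.inr i ∉ S) ∨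
  (Sum.inl i.castSucc ∉ S ∧ Sum.inl i.succ ∈ S ∧ Sum.inr i ∉ S) ∨
  (Sum.inl i.castSucc ∉ S ∧ Sum.inl i.succ ∉ S ∧ Sum.inr i ∈ S)

lemma ids_iff (n : ℕ) (S : Finset (Fin (n+2) ⊕ Fin (n+1))) :
    IsIndepDomSet (triChain (n+1)) S ↔ ∀ i : Fin (n+1), Tone n i S := by
  constructor
  · rintro ⟨hind, hdom⟩ i
    -- adjacency of the three triangle vertices
    have aLR : (triChain (n+1)).Adj (Sum.inl i.castSucc) (Sum.inl i.succ) := by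
      rw [triChain_adj]; simp
    have aLy : (triChain (n+1)).Adj (Sum.inl i.castSucc) (Sum.inr i) := by
      rw [triChain_adj]; simp
    have aRy : (triChain (n+1)).Adj (Sum.inl i.succ) (Sum.inr i) := by
      rw [triChain_adj]; simp
    by_cases hy : Sum.inr i ∈ S
    · have h1 : Sum.inl i.castSucc ∉ S := fun h => hind _ h _ hy aLy
      have h2 : Sum.inl i.succ ∉ S := fun h => hind _ h _ hy aRy
      exact Or.inr (Or.inr ⟨h1, h2, hy⟩)
    · obtain ⟨w, hwS, hw⟩ := hdom _ hy
      rw [triChain_adj] at hw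
      rcases w with j | l
      · rcases hw with h | h
        · -- j = i : w = xL i
          have hj : j = i.castSucc := by rw [Fin.ext_iff]; simpa using h
          subst hj
          have h2 : Sum.inl i.succ ∉ S := fun h' => hind _ hwS _ h' aLR
          exact Or.inl ⟨hwS, h2, hy⟩
        · have hj : j = i.succ := by rw [Fin.ext_iff]; simpa using h
          subst hj
          have h1 : Sum.inl i.castSucc ∉ S := fun h' => hind _ h' _ hwS aLR
          exact Or.inr (Or.inl ⟨h1, hwS, hy⟩)
      · exact hw.elim
  · intro hT
    constructor
    · intro v hv w hw hadj
      rw [triChain_adj] at hadj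
      rcases v with i | k <;> rcases w with j | l
      · -- edge x_i x_j
        rcases hadj with h | h
        · have hi : (i:ℕ) < n+1 := by omega
          rcases hT ⟨i, hi⟩ with ⟨h1,h2,_⟩ | ⟨h1,h2,_⟩ | ⟨h1,h2,_⟩ <;>
          · have e1 : Sum.inl (Fin.castSucc ⟨(i:ℕ), hi⟩) = (Sum.inl i : Fin (n+2) ⊕ Fin (n+1)) := by
              simp [Fin.ext_iff]
            have e2 : Sum.inl (Fin.succ ⟨(i:ℕ), hi⟩) = (Sum.inl j : Fin (n+2) ⊕ Fin (n+1)) := by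
              simp [Fin.ext_iff]; omega
            rw [e1] at h1; rw [e2] at h2; tauto
        · have hj : (j:ℕ) < n+1 := by omega
          rcases hT ⟨j, hj⟩ with ⟨h1,h2,_⟩ | ⟨h1,h2,_⟩ | ⟨h1,h2,_⟩ <;>
          · have e1 : Sum.inl (Fin.castSucc ⟨(j:ℕ), hj⟩) = (Sum.inl j : Fin (n+2) ⊕ Fin (n+1)) := by
              simp [Fin.ext_iff]
            have e2 : Sum.inl (Fin.succ ⟨(j:ℕ), hj⟩) = (Sum.inl i : Fin (n+2) ⊕ Fin (n+1)) := by
              simp [Fin.ext_iff]; omega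
            rw [e1] at h1; rw [e2] at h2; tauto
      · rcases hT l with ⟨h1,h2,h3⟩ | ⟨h1,h2,h3⟩ | ⟨h1,h2,h3⟩ <;>
        · rcases hadj with h | h
          · have e1 : Sum.inl l.castSucc = (Sum.inl i : Fin (n+2) ⊕ Fin (n+1)) := by
              simp [Fin.ext_iff]; omega
            rw [e1] at h1; tauto
          · have e2 : Sum.inl l.succ = (Sum.inl i : Fin (n+2) ⊕ Fin (n+1)) := by
              simp [Fin.ext_iff]; omega
            rw [e2] at h2; tauto
      · rcases hT k with ⟨h1,h2,h3⟩ | ⟨h1,h2,h3⟩ | ⟨h1,h2,h3⟩ <;>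
        · rcases hadj with h | h
          · have e1 : Sum.inl k.castSucc = (Sum.inl j : Fin (n+2) ⊕ Fin (n+1)) := by
              simp [Fin.ext_iff]; omega
            rw [e1] at h1; tauto
          · have e2 : Sum.inl k.succ = (Sum.inl j : Fin (n+2) ⊕ Fin (n+1)) := by
              simp [Fin.ext_iff]; omega
            rw [e2] at h2; tauto
      · exact hadj
    · intro v hv
      rcases v with j | k
      · by_cases hj : (j:ℕ) < n+1
        · -- v = xL ⟨j⟩
          have e1 : Sum.inl (Fin.castSucc ⟨(j:ℕ), hj⟩) = (Sum.inl j : Fin (n+2) ⊕ Fin (n+1)) := by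
            simp [Fin.ext_iff]
          rcases hT ⟨j, hj⟩ with ⟨h1,h2,h3⟩ | ⟨h1,h2,h3⟩ | ⟨h1,h2,h3⟩
          · rw [e1] at h1; exact absurd h1 hv
          · exact ⟨Sum.inl (Fin.succ ⟨(j:ℕ), hj⟩), h2, by rw [triChain_adj]; simp⟩
          · exact ⟨Sum.inr ⟨(j:ℕ), hj⟩, h3, by rw [triChain_adj]; simp⟩
        · have hj2 : (j:ℕ) = n+1 := by omega
          have hn : (n:ℕ) < n+1 := by omega
          have e2 : Sum.inl (Fin.succ ⟨n, hn⟩) = (Sum.inl j : Fin (n+2) ⊕ Fin (n+1)) := by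
            simp [Fin.ext_iff]; omega
          rcases hT ⟨n, hn⟩ with ⟨h1,h2,h3⟩ | ⟨h1,h2,h3⟩ | ⟨h1,h2,h3⟩
          · exact ⟨Sum.inl (Fin.castSucc ⟨n, hn⟩), h1, by rw [triChain_adj]; simp [Fin.ext_iff]; omega⟩
          · rw [e2] at h2; exact absurd h2 hv
          · exact ⟨Sum.inr ⟨n, hn⟩, h3, by rw [triChain_adj]; simp [Fin.ext_iff]; omega⟩
      · rcases hT k with ⟨h1,h2,h3⟩ | ⟨h1,h2,h3⟩ | ⟨h1,h2,h3⟩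
        · exact ⟨Sum.inl k.castSucc, h1, by rw [triChain_adj]; simp⟩
        · exact ⟨Sum.inl k.succ, h2, by rw [triChain_adj]; simp⟩
        · exact absurd h3 hv


def P (n : ℕ) (c : Fin n → Fin 3) : Prop :=
  ∀ i : Fin n, ∀ h : (i:ℕ) + 1 < n, (c ⟨(i:ℕ)+1, h⟩ = 0 ↔ c i = 2)

instance (n : ℕ) : DecidablePred (P n) := fun c => by
  unfold P; infer_instance

def enc (n : ℕ) (S : Finset (Fin (n+2) ⊕ Fin (n+1))) : Fin (n+1) → Fin 3 :=
  fun i => if Sum.inr i ∈ S then 1 else if Sum.inl i.succ ∈ S then 2 else 0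

def Q (n : ℕ) (c : Fin (n+1) → Fin 3) : (Fin (n+2) ⊕ Fin (n+1)) → Prop
  | Sum.inl j => (∃ h : (j:ℕ) < n+1, c ⟨(j:ℕ), h⟩ = 0) ∨
      (0 < (j:ℕ) ∧ c ⟨(j:ℕ)-1, by have := j.2; omega⟩ = 2)
  | Sum.inr k => c k = 1

noncomputable def dec (n : ℕ) (c : Fin (n+1) → Fin 3) : Finset (Fin (n+2) ⊕ Fin (n+1)) :=
  @Finset.filter _ (Q n c) (Classical.decPred _) Finset.univ

lemma mem_dec (n : ℕ) (c : Fin (n+1) → Fin 3) (v) : v ∈ dec n c ↔ Q n c v := by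
  simp [dec]


lemma fin3_cases (a : Fin 3) : a = 0 ∨ a = 1 ∨ a = 2 := by revert a; decide

lemma mem_dec_y (n : ℕ) (c : Fin (n+1) → Fin 3) (i : Fin (n+1)) :
    Sum.inr i ∈ dec n c ↔ c i = 1 := by rw [mem_dec]; rfl

lemma mem_dec_xL (n : ℕ) (c : Fin (n+1) → Fin 3) (hc : P (n+1) c) (i : Fin (n+1)) :
    Sum.inl i.castSucc ∈ dec n c ↔ c i = 0 := by
  rw [mem_dec]
  show (∃ h : (i:ℕ) < n+1, c ⟨(i:ℕ), h⟩ = 0) ∨ (0 < (i:ℕ) ∧ c ⟨(i:ℕ)-1, _⟩ = 2) ↔ _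
  constructor
  · rintro (⟨h, hc0⟩ | ⟨h, hc2⟩)
    · rwa [Fin.eta] at hc0
    · have h2 : (i:ℕ)-1+1 < n+1 := by have := i.2; omega
      have := hc ⟨(i:ℕ)-1, by omega⟩ h2
      simp only at this
      have e : (⟨(i:ℕ)-1+1, h2⟩ : Fin (n+1)) = i := by rw [Fin.ext_iff]; simp only [Fin.val_mk]; omega
      rw [e] at this
      exact this.mpr hc2
  · intro h0
    exact Or.inl ⟨i.2, by rwa [Fin.eta]⟩

lemma mem_dec_xR (n : ℕ) (c : Fin (n+1) → Fin 3) (hc : P (n+1) c) (i : Fin (n+1)) :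
    Sum.inl i.succ ∈ dec n c ↔ c i = 2 := by
  rw [mem_dec]
  show (∃ h : (i:ℕ)+1 < n+1, c ⟨(i:ℕ)+1, h⟩ = 0) ∨ (0 < (i:ℕ)+1 ∧ c ⟨(i:ℕ)+1-1, _⟩ = 2) ↔ _
  have e : (⟨(i:ℕ)+1-1, by have := i.2; omega⟩ : Fin (n+1)) = i := by
    rw [Fin.ext_iff]; simp
  constructor
  · rintro (⟨h, hc0⟩ | ⟨h, hc2⟩)
    · have := hc i h
      exact this.mp hc0
    · rwa [e] at hc2
  · intro h2
    exact Or.inr ⟨Nat.succ_pos _, by rwa [e]⟩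

lemma tone_dec (n : ℕ) (c : Fin (n+1) → Fin 3) (hc : P (n+1) c) (i : Fin (n+1)) :
    Tone n i (dec n c) := by
  unfold Tone
  rw [mem_dec_xL n c hc, mem_dec_xR n c hc, mem_dec_y]
  rcases fin3_cases (c i) with h | h | h <;> rw [h] <;> simp


lemma enc_spec (n : ℕ) (S : Finset (Fin (n+2) ⊕ Fin (n+1))) (i : Fin (n+1))
    (hT : Tone n i S) :
    (enc n S i = 0 ↔ Sum.inl i.castSucc ∈ S) ∧ (enc n S i = 1 ↔ Sum.inr i ∈ S) ∧
      (enc n S i = 2 ↔ Sum.inl i.succ ∈ S) := by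
  rcases hT with ⟨h1,h2,h3⟩ | ⟨h1,h2,h3⟩ | ⟨h1,h2,h3⟩ <;>
    simp [enc, h1, h2, h3]

lemma P_enc (n : ℕ) (S : Finset (Fin (n+2) ⊕ Fin (n+1))) (hT : ∀ i, Tone n i S) :
    P (n+1) (enc n S) := by
  intro i h
  have e : (Fin.castSucc (⟨(i:ℕ)+1, h⟩ : Fin (n+1))) = i.succ := by
    rw [Fin.ext_iff]; simp
  rw [(enc_spec n S ⟨(i:ℕ)+1, h⟩ (hT _)).1, (enc_spec n S i (hT _)).2.2, e]

lemma dec_enc (n : ℕ) (S : Finset (Fin (n+2) ⊕ Fin (n+1))) (hT : ∀ i, Tone n i S) :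
    dec n (enc n S) = S := by
  ext v
  rcases v with j | k
  · rw [mem_dec]
    show (∃ h : (j:ℕ) < n+1, enc n S ⟨(j:ℕ), h⟩ = 0) ∨
      (0 < (j:ℕ) ∧ enc n S ⟨(j:ℕ)-1, by have := j.2; omega⟩ = 2) ↔ _
    constructor
    · rintro (⟨h, hc0⟩ | ⟨h, hc2⟩)
      · rw [(enc_spec n S ⟨(j:ℕ), h⟩ (hT _)).1] at hc0
        have e : Sum.inl (Fin.castSucc ⟨(j:ℕ), h⟩) = (Sum.inl j : Fin (n+2) ⊕ Fin (n+1)) := by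
          simp [Fin.ext_iff]
        rwa [e] at hc0
      · rw [(enc_spec n S ⟨(j:ℕ)-1, by have := j.2; omega⟩ (hT _)).2.2] at hc2
        have e : Sum.inl (Fin.succ ⟨(j:ℕ)-1, by have := j.2; omega⟩) = (Sum.inl j : Fin (n+2) ⊕ Fin (n+1)) := by
          simp [Fin.ext_iff]; omega
        rwa [e] at hc2
    · intro hj
      by_cases h : (j:ℕ) < n+1
      · refine Or.inl ⟨h, ?_⟩
        rw [(enc_spec n S ⟨(j:ℕ), h⟩ (hT _)).1]
        have e : Sum.inl (Fin.castSucc ⟨(j:ℕ), h⟩) = (Sum.inl j : Fin (n+2) ⊕ Fin (n+1)) := by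
          simp [Fin.ext_iff]
        rwa [e]
      · have hj1 : 0 < (j:ℕ) := by omega
        refine Or.inr ⟨hj1, ?_⟩
        rw [(enc_spec n S ⟨(j:ℕ)-1, by have := j.2; omega⟩ (hT _)).2.2]
        have e : Sum.inl (Fin.succ ⟨(j:ℕ)-1, by have := j.2; omega⟩) = (Sum.inl j : Fin (n+2) ⊕ Fin (n+1)) := by
          simp [Fin.ext_iff]; omega
        rwa [e]
  · rw [mem_dec_y, (enc_spec n S k (hT _)).2.1]

lemma enc_dec (n : ℕ) (c : Fin (n+1) → Fin 3) (hc : P (n+1) c) :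
    enc n (dec n c) = c := by
  funext i
  rcases fin3_cases (c i) with h | h | h <;>
  · have h1 := (mem_dec_xL n c hc i)
    have h2 := (mem_dec_xR n c hc i)
    have h3 := (mem_dec_y n c i)
    simp only [enc, h, h1, h2, h3]
    simp [h]




lemma cons_mk_succ {k : ℕ} (a : Fin 3) (d : Fin (k+1) → Fin 3) (m : ℕ) (h : m+1 < k+2) :
    (Fin.cons a d : Fin (k+2) → Fin 3) ⟨m+1, h⟩ = d ⟨m, by omega⟩ := by
  have e : (⟨m+1, h⟩ : Fin (k+2)) = Fin.succ ⟨m, by omega⟩ := by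
    rw [Fin.ext_iff]; simp
  rw [e, Fin.cons_succ]

lemma P_cons (k : ℕ) (a : Fin 3) (d : Fin (k+1) → Fin 3) :
    P (k+2) (Fin.cons a d) ↔ ((d 0 = 0 ↔ a = 2) ∧ P (k+1) d) := by
  constructor
  · intro hp
    constructor
    · have h1 := hp ⟨0, by omega⟩ (show 0+1 < k+2 by omega)
      rw [cons_mk_succ a d 0] at h1
      simp only [Fin.mk_zero, Fin.cons_zero] at h1
      exact h1
    · intro i h
      have h2 : ((⟨(i:ℕ)+1, by omega⟩ : Fin (k+2)) : ℕ) + 1 < k+2 := by simp; omega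
      have := hp ⟨(i:ℕ)+1, by omega⟩ h2
      simp only [Fin.val_mk] at this
      rwa [cons_mk_succ a d ((i:ℕ)+1), cons_mk_succ a d (i:ℕ),
        show (⟨(i:ℕ)+1, h⟩ : Fin (k+1)) = ⟨(i:ℕ)+1, h⟩ from rfl, Fin.eta] at this
  · rintro ⟨h0, hp⟩ i h
    rcases i with ⟨iv, hiv⟩
    simp only [Fin.val_mk] at h ⊢
    rcases Nat.eq_zero_or_pos iv with rfl | hpos
    · rwa [cons_mk_succ a d 0,
        show (⟨0, hiv⟩ : Fin (k+2)) = 0 from by rw [Fin.ext_iff]; simp, Fin.cons_zero,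
        show (⟨0, by omega⟩ : Fin (k+1)) = 0 from by rw [Fin.ext_iff]; simp]
    · obtain ⟨m, rfl⟩ : ∃ m, iv = m + 1 := ⟨iv - 1, by omega⟩
      rw [cons_mk_succ a d (m+1), cons_mk_succ a d m]
      exact hp ⟨m, by omega⟩ (by simp; omega)


def consEquiv (k : ℕ) : {c : Fin (k+2) → Fin 3 // P (k+2) c} ≃
    {p : Fin 3 × (Fin (k+1) → Fin 3) // P (k+1) p.2 ∧ (p.2 0 = 0 ↔ p.1 = 2)} where
  toFun c := ⟨(c.1 0, Fin.tail c.1), by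
    have := c.2; rw [← Fin.cons_self_tail c.1, P_cons] at this
    exact ⟨this.2, this.1⟩⟩
  invFun p := ⟨Fin.cons p.1.1 p.1.2, (P_cons k p.1.1 p.1.2).mpr ⟨p.2.2, p.2.1⟩⟩
  left_inv c := Subtype.ext (Fin.cons_self_tail c.1)
  right_inv p := by apply Subtype.ext; apply Prod.ext <;> simp

def consEquivB (k : ℕ) : {c : Fin (k+2) → Fin 3 // P (k+2) c ∧ c 0 ≠ 0} ≃
    {p : Fin 3 × (Fin (k+1) → Fin 3) //
      (P (k+1) p.2 ∧ (p.2 0 = 0 ↔ p.1 = 2)) ∧ p.1 ≠ 0} where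
  toFun c := ⟨(c.1 0, Fin.tail c.1), by
    have := c.2.1; rw [← Fin.cons_self_tail c.1, P_cons] at this
    exact ⟨⟨this.2, this.1⟩, c.2.2⟩⟩
  invFun p := ⟨Fin.cons p.1.1 p.1.2, (P_cons k p.1.1 p.1.2).mpr ⟨p.2.1.2, p.2.1.1⟩,
    by simpa using p.2.2⟩
  left_inv c := Subtype.ext (Fin.cons_self_tail c.1)
  right_inv p := by apply Subtype.ext; apply Prod.ext <;> simp

example : True := trivial

noncomputable def gcount (k : ℕ) : ℕ := Nat.card {c : Fin k → Fin 3 // P k c}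
noncomputable def ag (k : ℕ) : ℕ :=
  Nat.card {d : Fin (k+1) → Fin 3 // P (k+1) d ∧ d 0 = 0}
noncomputable def bg (k : ℕ) : ℕ :=
  Nat.card {d : Fin (k+1) → Fin 3 // P (k+1) d ∧ d 0 ≠ 0}

lemma ag_add_bg (k : ℕ) : ag k + bg k = gcount (k+1) := by
  rw [ag, bg, gcount, Nat.card_eq_fintype_card, Nat.card_eq_fintype_card,
    Nat.card_eq_fintype_card]
  rw [← Fintype.card_sum]
  apply Fintype.card_congr
  exact ((Equiv.subtypeSubtypeEquivSubtypeInter (P (k+1)) (fun d => d 0 = 0)).symm.sumCongr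
    (Equiv.subtypeSubtypeEquivSubtypeInter (P (k+1)) (fun d => d 0 ≠ 0)).symm).trans
    (Equiv.sumCompl _)

lemma gcount_succ (k : ℕ) : gcount (k+2) = ag k + (bg k + bg k) := by
  have E : {c : Fin (k+2) → Fin 3 // P (k+2) c} ≃
      Σ a : Fin 3, {d : Fin (k+1) → Fin 3 // P (k+1) d ∧ (d 0 = 0 ↔ a = 2)} :=
    (consEquiv k).trans (Equiv.subtypeProdEquivSigmaSubtype
      (fun (a : Fin 3) (d : Fin (k+1) → Fin 3) => P (k+1) d ∧ (d 0 = 0 ↔ a = 2)))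
  rw [gcount, Nat.card_congr E]
  rw [Nat.card_eq_fintype_card, Fintype.card_sigma, Fin.sum_univ_three]
  have h0 : Fintype.card {d : Fin (k+1) → Fin 3 // P (k+1) d ∧ (d 0 = 0 ↔ (0:Fin 3) = 2)}
      = bg k := by
    rw [bg, Nat.card_eq_fintype_card]
    exact Fintype.card_congr (Equiv.subtypeEquivRight (fun d => by
      simp [show ¬((0:Fin 3) = 2) from by decide]))
  have h1 : Fintype.card {d : Fin (k+1) → Fin 3 // P (k+1) d ∧ (d 0 = 0 ↔ (1:Fin 3) = 2)}
      = bg k := by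
    rw [bg, Nat.card_eq_fintype_card]
    exact Fintype.card_congr (Equiv.subtypeEquivRight (fun d => by
      simp [show ¬((1:Fin 3) = 2) from by decide]))
  have h2 : Fintype.card {d : Fin (k+1) → Fin 3 // P (k+1) d ∧ (d 0 = 0 ↔ (2:Fin 3) = 2)}
      = ag k := by
    rw [ag, Nat.card_eq_fintype_card]
    exact Fintype.card_congr (Equiv.subtypeEquivRight (fun d => by
      simp [show ((2:Fin 3) = 2) from by decide]))
  rw [h0]
  rw [h1]
  rw [h2]
  clear E h0 h1 h2
  omega

lemma bg_succ (k : ℕ) : bg (k+1) = gcount (k+1) := by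
  have E : {c : Fin (k+2) → Fin 3 // P (k+2) c ∧ c 0 ≠ 0} ≃
      Σ a : Fin 3, {d : Fin (k+1) → Fin 3 // (P (k+1) d ∧ (d 0 = 0 ↔ a = 2)) ∧ a ≠ 0} :=
    (consEquivB k).trans (Equiv.subtypeProdEquivSigmaSubtype
      (fun (a : Fin 3) (d : Fin (k+1) → Fin 3) => (P (k+1) d ∧ (d 0 = 0 ↔ a = 2)) ∧ a ≠ 0))
  rw [bg, Nat.card_congr E]
  rw [Nat.card_eq_fintype_card, Fintype.card_sigma, Fin.sum_univ_three]
  have h0 : Fintype.card {d : Fin (k+1) → Fin 3 //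
      (P (k+1) d ∧ (d 0 = 0 ↔ (0:Fin 3) = 2)) ∧ (0:Fin 3) ≠ 0} = 0 := by
    simp
  have h1 : Fintype.card {d : Fin (k+1) → Fin 3 //
      (P (k+1) d ∧ (d 0 = 0 ↔ (1:Fin 3) = 2)) ∧ (1:Fin 3) ≠ 0} = bg k := by
    rw [bg, Nat.card_eq_fintype_card]
    exact Fintype.card_congr (Equiv.subtypeEquivRight (fun d => by
      simp [show ¬((1:Fin 3) = 2) from by decide, show ¬((1:Fin 3) = 0) from by decide]))
  have h2 : Fintype.card {d : Fin (k+1) → Fin 3 //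
      (P (k+1) d ∧ (d 0 = 0 ↔ (2:Fin 3) = 2)) ∧ (2:Fin 3) ≠ 0} = ag k := by
    rw [ag, Nat.card_eq_fintype_card]
    exact Fintype.card_congr (Equiv.subtypeEquivRight (fun d => by
      simp [show ((2:Fin 3) = 2) from by decide, show ¬((2:Fin 3) = 0) from by decide]))
  rw [h0]
  rw [h1]
  rw [h2]
  rw [← ag_add_bg k]
  clear E h0 h1 h2
  omega

lemma gcount_rec (k : ℕ) : gcount (k+3) = gcount (k+2) + gcount (k+1) := by
  have e1 : gcount (k+3) = ag (k+1) + (bg (k+1) + bg (k+1)) := gcount_succ (k+1)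
  have e2 : bg (k+1) = gcount (k+1) := bg_succ k
  have e5 : ag (k+1) + bg (k+1) = gcount (k+2) := ag_add_bg (k+1)
  -- g(k+3) = ag(k+1) + 2 bg(k+1); bg(k+1) = g(k+1); ag(k+1)+bg(k+1) = g(k+2)
  omega

lemma gcount_one : gcount 1 = 3 := by
  rw [gcount, Nat.card_eq_fintype_card]; decide

lemma gcount_two : gcount 2 = 5 := by
  rw [gcount, Nat.card_eq_fintype_card]; decide


noncomputable def bigEquiv (n : ℕ) :
    {S : Finset (Fin (n+2) ⊕ Fin (n+1)) // IsIndepDomSet (triChain (n+1)) S} ≃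
      {c : Fin (n+1) → Fin 3 // P (n+1) c} where
  toFun S := ⟨enc n S.1, P_enc n S.1 ((ids_iff n S.1).mp S.2)⟩
  invFun c := ⟨dec n c.1, (ids_iff n _).mpr (fun i => tone_dec n c.1 c.2 i)⟩
  left_inv S := Subtype.ext (dec_enc n S.1 ((ids_iff n S.1).mp S.2))
  right_inv c := Subtype.ext (enc_dec n c.1 c.2)

/-- The number of independent dominating sets of the chain triangular cactus `T n`. -/
noncomputable def numIDSTri (n : ℕ) : ℕ :=
  Nat.card {S : Finset (Fin (n + 1) ⊕ Fin n) // IsIndepDomSet (triChain n) S}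

lemma numIDSTri_eq_gcount (n : ℕ) : numIDSTri (n+1) = gcount (n+1) :=
  Nat.card_congr (bigEquiv n)

lemma numIDSTri_zero : numIDSTri 0 = 1 := by
  rw [numIDSTri]
  rw [Nat.card_eq_one_iff_unique]
  have hadj : ∀ p q : Fin 1 ⊕ Fin 0, ¬ (triChain 0).Adj p q := by
    intro p q h
    rw [triChain_adj] at h
    rcases p with i | k
    · rcases q with j | l
      · omega
      · exact l.elim0
    · exact k.elim0
  have key : ∀ S : Finset (Fin 1 ⊕ Fin 0),
      IsIndepDomSet (triChain 0) S ↔ S = {Sum.inl 0} := by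
    intro S
    constructor
    · rintro ⟨hind, hdom⟩
      have h0 : Sum.inl 0 ∈ S := by
        by_contra h
        obtain ⟨w, hw, hadj'⟩ := hdom _ h
        exact hadj _ _ hadj'
      ext v
      rcases v with i | k
      · have : i = 0 := Fin.ext (by omega)
        subst this
        simp [h0]
      · exact k.elim0
    · rintro rfl
      refine ⟨fun v _ w _ h => hadj _ _ h, fun v hv => ?_⟩
      exfalso
      rcases v with i | k
      · have : i = 0 := Fin.ext (by omega)
        subst this
        simp at hv
      · exact k.elim0
  constructor
  · constructor
    intro a b
    apply Subtype.ext
    rw [(key a.1).mp a.2, (key b.1).mp b.2]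
  · exact ⟨⟨{Sum.inl 0}, (key _).mpr rfl⟩⟩

lemma numIDSTri_one : numIDSTri 1 = 3 := by
  rw [numIDSTri_eq_gcount 0, gcount_one]

lemma numIDSTri_two : numIDSTri 2 = 5 := by
  rw [numIDSTri_eq_gcount 1, gcount_two]

lemma numIDSTri_rec (k : ℕ) :
    numIDSTri (k+3) = numIDSTri (k+2) + numIDSTri (k+1) := by
  rw [numIDSTri_eq_gcount (k+2), numIDSTri_eq_gcount (k+1), numIDSTri_eq_gcount k]
  exact gcount_rec k

/-- In `ℚ⟦X⟧`, `(1 - X - X²) · ∑_{n≥0} t_n Xⁿ = 1 + 2X + X²`, where `t n` is the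
number of independent dominating sets of `T n` (and `t 0 = 1`, `T 0` being the
one-vertex graph). -/
theorem numIDSTri_generating_function :
    (1 - PowerSeries.X - PowerSeries.X ^ 2) *
        PowerSeries.mk (fun n : ℕ => (numIDSTri n : ℚ)) =
      1 + 2 * PowerSeries.X + PowerSeries.X ^ 2 := by
  set t : ℕ → ℚ := fun n : ℕ => (numIDSTri n : ℚ) with ht
  have key : (1 - PowerSeries.X - PowerSeries.X ^ 2) * PowerSeries.mk t =
      PowerSeries.mk t - PowerSeries.X * PowerSeries.mk t -
        PowerSeries.X * (PowerSeries.X * PowerSeries.mk t) := by ring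
  rw [key]
  have key2 : (1 + 2 * PowerSeries.X + PowerSeries.X ^ 2 : PowerSeries ℚ) =
      1 + PowerSeries.C (2 : ℚ) * PowerSeries.X + PowerSeries.X ^ 2 := by
    rw [map_ofNat]
  rw [key2]
  ext n
  simp only [map_sub, map_add]
  match n with
  | 0 =>
    simp [PowerSeries.coeff_zero_eq_constantCoeff, ht, numIDSTri_zero]
  | 1 =>
    simp [PowerSeries.coeff_succ_X_mul, PowerSeries.coeff_one, PowerSeries.coeff_X, PowerSeries.coeff_C_mul, PowerSeries.coeff_X_pow,
      PowerSeries.coeff_zero_eq_constantCoeff, ht, numIDSTri_zero, numIDSTri_one]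
    norm_num
  | 2 =>
    simp [PowerSeries.coeff_succ_X_mul, PowerSeries.coeff_one, PowerSeries.coeff_X, PowerSeries.coeff_C_mul, PowerSeries.coeff_X_pow,
      PowerSeries.coeff_X_pow, ht, numIDSTri_zero, numIDSTri_one, numIDSTri_two]
    norm_num
  | (k+3) =>
    simp [PowerSeries.coeff_succ_X_mul, PowerSeries.coeff_one, PowerSeries.coeff_X, PowerSeries.coeff_C_mul, PowerSeries.coeff_X_pow,
      PowerSeries.coeff_X_pow, ht, numIDSTri_rec k]
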